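/- Let r ≥ 2 and let G be a K_{r+1}-free graph on n vertices. Then the number of r-cliques of G satisfies c_r(G) ≤ ⌊(n/r)·(∏_{s=0}^{r-1} ⌊(n+s)/r⌋)^{(r-1)/r}⌋, i.e., c_r(G) ≤ ⌊(n/r)·ρ_r(T_r(n))⌋. -/

import Mathlib

open Finset

/-- The finset of all `r`-cliques (sets of `r` pairwise adjacent vertices) of `G`. -/
noncomputable def rCliques {V : Type*} [Fintype V] [DecidableEq V]
    (G : SimpleGraph V) (r : ℕ) : Finset (Finset V) :=
  letI := Classical.decPred (fun K : Finset V => G.IsNClique r K)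
  Finset.univ.filter (fun K => G.IsNClique r K)

/-- The `r`-clique spectral radius of `G`: the supremum over nonnegative vectors `x`
with `∑ v, x v ^ r = 1` of `r * ∑_{K an r-clique} ∏_{i ∈ K} x i`. -/
noncomputable def cliqueSpecRad {V : Type*} [Fintype V] [DecidableEq V]
    (G : SimpleGraph V) (r : ℕ) : ℝ :=
  sSup { y : ℝ | ∃ x : V → ℝ, (∀ v, 0 ≤ x v) ∧ (∑ v, x v ^ r) = 1 ∧
    y = r * ∑ K ∈ rCliques G r, ∏ i ∈ K, x i }

/-! ### Auxiliary natural-number arithmetic -/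

lemma natdiv_sum (r n : ℕ) (hr : 1 ≤ r) : ∑ i ∈ range r, (n + i) / r = n := by
  induction n with
  | zero =>
    refine Finset.sum_eq_zero fun i hi => Nat.div_eq_of_lt ?_
    simpa using mem_range.1 hi
  | succ n ih =>
    have h2 := Finset.sum_range_succ' (fun i => (n + i) / r) r
    have h3 := Finset.sum_range_succ (fun i => (n + i) / r) r
    have h4 : (n + r) / r = n / r + 1 := Nat.add_div_right n hr
    have h5 : ∑ i ∈ range r, (n + 1 + i) / r = ∑ i ∈ range r, (n + (i + 1)) / r :=
      Finset.sum_congr rfl fun i _ => by rw [show n + 1 + i = n + (i + 1) by omega]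
    simp only [Nat.add_zero] at h2 h3
    rw [h5]
    omega

lemma natdiv_one (x : ℕ) (hb : 0 < x) (hx : x < 2) : x = 1 := by omega

lemma natdiv_key (r n i : ℕ) (hr : 2 ≤ r) (hi : i < r - 1) :
    (n - (n + r - 1) / r + i) / (r - 1) = (n + i) / r := by
  have h0 : 0 < r := by omega
  have h1 : 0 < r - 1 := by omega
  obtain ⟨q, t, ht, rfl⟩ : ∃ q t, t < r ∧ n = q * r + t :=
    ⟨n / r, n % r, Nat.mod_lt _ h0, (Nat.div_add_mod' n r).symm⟩
  have hq : q * r = q * (r - 1) + q := by rw [← Nat.mul_succ]; congr 1; omega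
  have h2 : (r - 1) * q = q * (r - 1) := Nat.mul_comm _ _
  have hcomm : q * r = r * q := Nat.mul_comm _ _
  have ha : (q * r + t + r - 1) / r = (t + r - 1) / r + q := by
    rw [show q * r + t + r - 1 = t + r - 1 + r * q by omega, Nat.add_mul_div_left _ _ h0]
  have hrhs : (q * r + t + i) / r = (t + i) / r + q := by
    rw [show q * r + t + i = t + i + r * q by omega, Nat.add_mul_div_left _ _ h0]
  rw [ha, hrhs]
  rcases Nat.eq_zero_or_pos t with rfl | htpos
  · rw [Nat.div_eq_of_lt (show 0 + r - 1 < r by omega)]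
    have e1 : q * r + 0 - (0 + q) + i = i + (r - 1) * q := by omega
    rw [e1, Nat.add_mul_div_left _ _ h1, Nat.div_eq_of_lt hi,
      Nat.div_eq_of_lt (show 0 + i < r by omega)]
  · rw [show (t + r - 1) / r = 1 from Nat.div_eq_of_lt_le (by omega) (by omega)]
    have e1 : q * r + t - (1 + q) + i = (t - 1 + i) + (r - 1) * q := by omega
    rw [e1, Nat.add_mul_div_left _ _ h1]
    congr 1
    rcases Nat.lt_or_ge (t + i) r with hc | hc
    · rw [Nat.div_eq_of_lt (by omega), Nat.div_eq_of_lt (by omega)]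
    · rw [show (t - 1 + i) / (r - 1) = 1 from Nat.div_eq_of_lt_le (by omega) (by omega),
        show (t + i) / r = 1 from Nat.div_eq_of_lt_le (by omega) (by omega)]

lemma natprod_mono (k r d m : ℕ) (h : d ≤ m) :
    ∏ i ∈ range k, (d + i) / r ≤ ∏ i ∈ range k, (m + i) / r :=
  Finset.prod_le_prod' fun i _ => Nat.div_le_div_right (by omega)

/-! ### Cliques inside a subset -/

noncomputable def rCliquesIn {V : Type*} [DecidableEq V] (G : SimpleGraph V) (r : ℕ)
    (s : Finset V) : Finset (Finset V) :=
  letI := Classical.decPred (fun K : Finset V => G.IsNClique r K)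
  s.powerset.filter (fun K => G.IsNClique r K)

lemma mem_rCliquesIn {V : Type*} [DecidableEq V] {G : SimpleGraph V} {r : ℕ}
    {s : Finset V} {K : Finset V} :
    K ∈ rCliquesIn G r s ↔ K ⊆ s ∧ G.IsNClique r K := by
  classical
  simp [rCliquesIn, Finset.mem_filter, Finset.mem_powerset]

/-! ### Greedy clique construction (min-degree argument) -/

lemma greedy_aux {V : Type*} [Fintype V] [DecidableEq V] (G : SimpleGraph V)
    [DecidableRel G.Adj] (s : Finset V) (m : ℕ)
    (hdeg : ∀ v ∈ s, #s ≤ m + #(s ∩ G.neighborFinset v)) :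
    ∀ k, (∀ j, j < k → j * m < #s) →
      ∃ S T : Finset V, S ⊆ s ∧ T ⊆ s ∧ G.IsNClique k S ∧
        (∀ u ∈ T, ∀ w ∈ S, G.Adj u w) ∧ (∀ u ∈ T, u ∉ S) ∧ #s ≤ #T + k * m := by
  intro k
  induction k with
  | zero =>
    intro _
    exact ⟨∅, s, empty_subset _, Finset.Subset.rfl, by simp, by simp, by simp, by simp⟩
  | succ k ih =>
    intro hk
    obtain ⟨S, T, hSs, hTs, hSc, hadj, hdisj, hcard⟩ := ih fun j hj => hk j (by omega)
    have hT : T.Nonempty := Finset.card_pos.1 (by have := hk k (by omega); omega)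
    obtain ⟨v, hv⟩ := hT
    refine ⟨insert v S, T ∩ G.neighborFinset v, Finset.insert_subset (hTs hv) hSs,
      Finset.inter_subset_left.trans hTs, hSc.insert fun b hb => hadj v hv b hb, ?_, ?_, ?_⟩
    · intro u hu w hw
      rw [Finset.mem_inter] at hu
      rcases Finset.mem_insert.1 hw with rfl | hw
      · exact ((SimpleGraph.mem_neighborFinset _ _ _).1 hu.2).symm
      · exact hadj u hu.1 w hw
    · intro u hu
      rw [Finset.mem_inter] at hu
      have hadjvu : G.Adj v u := (SimpleGraph.mem_neighborFinset _ _ _).1 hu.2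
      rw [Finset.mem_insert]
      push_neg
      exact ⟨(hadjvu.ne).symm, hdisj u hu.1⟩
    · have h1 : #(T ∩ G.neighborFinset v) + #(T \ G.neighborFinset v) = #T :=
        Finset.card_inter_add_card_sdiff T _
      have h2 : T \ G.neighborFinset v ⊆ s \ (s ∩ G.neighborFinset v) := by
        intro u hu
        rw [Finset.mem_sdiff] at hu ⊢
        exact ⟨hTs hu.1, fun h => hu.2 (Finset.mem_inter.1 h).2⟩
      have h3 : #(s \ (s ∩ G.neighborFinset v)) = #s - #(s ∩ G.neighborFinset v) :=
        Finset.card_sdiff_of_subset Finset.inter_subset_left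
      have h4 := hdeg v (hTs hv)
      have h5 := Finset.card_le_card h2
      have h6 : (k + 1) * m = k * m + m := by ring
      omega

lemma exists_low_deg {V : Type*} [Fintype V] [DecidableEq V] (G : SimpleGraph V)
    [DecidableRel G.Adj] (s : Finset V) (r : ℕ) (hr : 1 ≤ r) (hs : s.Nonempty)
    (hfree : G.CliqueFreeOn ↑s (r + 1)) :
    ∃ v ∈ s, #(s ∩ G.neighborFinset v) + (#s + r - 1) / r ≤ #s := by
  by_contra hcon
  push_neg at hcon
  set a := (#s + r - 1) / r with ha
  have hs1 : 1 ≤ #s := hs.card_pos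
  have ha1 : 1 ≤ a := by
    rw [ha, Nat.le_div_iff_mul_le (by omega)]
    omega
  have hra : a * r ≤ #s + r - 1 := Nat.div_mul_le_self _ _
  have hdeg : ∀ v ∈ s, #s ≤ (a - 1) + #(s ∩ G.neighborFinset v) := by
    intro v hv
    have := hcon v hv
    omega
  obtain ⟨S, T, hSs, _, hSc, _, _, _⟩ := greedy_aux G s (a - 1) hdeg (r + 1) (by
    intro j hj
    have h1 : j * (a - 1) ≤ r * (a - 1) := Nat.mul_le_mul_right _ (by omega)
    have h2 : r * a = r * (a - 1) + r := by
      conv_lhs => rw [show a = (a - 1) + 1 by omega]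
      rw [Nat.mul_succ]
    have h3 : r * a = a * r := Nat.mul_comm _ _
    omega)
  exact hfree (Finset.coe_subset.2 hSs) hSc

/-! ### Zykov's theorem -/

lemma zykov {V : Type*} [Fintype V] [DecidableEq V] (G : SimpleGraph V) :
    ∀ (N r : ℕ) (s : Finset V), r + #s ≤ N → 1 ≤ r → G.CliqueFreeOn ↑s (r + 1) →
      #(rCliquesIn G r s) ≤ ∏ i ∈ range r, (#s + i) / r := by
  classical
  intro N
  induction N with
  | zero => intro r s h h1 _; omega
  | succ N ih =>
    intro r s hN hr hfree
    rcases eq_or_lt_of_le hr with hr1 | hr2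
    · -- r = 1
      rw [← hr1] at *
      have hsub : rCliquesIn G 1 s ⊆ s.image (fun a => {a}) := by
        intro K hK
        rw [mem_rCliquesIn] at hK
        obtain ⟨a, rfl⟩ := Finset.card_eq_one.1 hK.2.2
        exact Finset.mem_image_of_mem _ (hK.1 (Finset.mem_singleton_self a))
      calc #(rCliquesIn G 1 s) ≤ #(s.image (fun a => {a})) := Finset.card_le_card hsub
        _ ≤ #s := Finset.card_image_le
        _ = ∏ i ∈ range 1, (#s + i) / 1 := by simp
    · -- 2 ≤ r
      rcases s.eq_empty_or_nonempty with rfl | hs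
      · have hempty : rCliquesIn G r ∅ = ∅ := by
          rw [Finset.eq_empty_iff_forall_notMem]
          intro K hK
          rw [mem_rCliquesIn, Finset.subset_empty] at hK
          obtain ⟨rfl, hc⟩ := hK
          have := SimpleGraph.isNClique_empty.1 hc
          omega
        simp [hempty]
      · obtain ⟨v, hv, hdeg⟩ := exists_low_deg G s r (by omega) hs hfree
        set n := #s with hn
        set a := (n + r - 1) / r with ha
        have hn1 : 1 ≤ n := hs.card_pos
        have ha1 : 1 ≤ a := by
          rw [ha, Nat.le_div_iff_mul_le (by omega)]
          omega
        -- split cliques by containing v or not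
        have hsplit : #(rCliquesIn G r s) =
            #((rCliquesIn G r s).filter (fun K => v ∈ K)) + #(rCliquesIn G r (s.erase v)) := by
          have hBeq : (rCliquesIn G r s).filter (fun K => ¬ v ∈ K) =
              rCliquesIn G r (s.erase v) := by
            ext K
            simp only [Finset.mem_filter, mem_rCliquesIn, Finset.subset_erase]
            tauto
          rw [← Finset.card_filter_add_card_filter_not
            (p := fun K : Finset V => v ∈ K), hBeq]
        -- cliques containing v inject into (r-1)-cliques in the neighborhood
        have hA : #((rCliquesIn G r s).filter (fun K => v ∈ K)) ≤
            #(rCliquesIn G (r - 1) (s ∩ G.neighborFinset v)) := by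
          apply Finset.card_le_card_of_injOn (fun K => K.erase v)
          · intro K hK
            simp only [Finset.coe_filter, Set.mem_setOf_eq, Finset.mem_filter, mem_rCliquesIn] at hK
            obtain ⟨⟨hKs, hKc⟩, hvK⟩ := hK
            rw [Finset.mem_coe, mem_rCliquesIn]
            refine ⟨?_, ?_, ?_⟩
            · intro u hu
              rw [Finset.mem_erase] at hu
              refine Finset.mem_inter.2 ⟨hKs hu.2, (SimpleGraph.mem_neighborFinset _ _ _).2 ?_⟩
              exact hKc.1 (Finset.mem_coe.2 hvK) (Finset.mem_coe.2 hu.2) (Ne.symm hu.1)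
            · exact hKc.1.subset (Finset.coe_subset.2 (Finset.erase_subset _ _))
            · rw [Finset.card_erase_of_mem hvK, hKc.2]
          · intro K1 h1 K2 h2 he
            simp only [Finset.coe_filter, Set.mem_setOf_eq, mem_rCliquesIn] at h1 h2
            have he' : K1.erase v = K2.erase v := he
            rw [← Finset.insert_erase h1.2, ← Finset.insert_erase h2.2, he']
        have hfree' : G.CliqueFreeOn ↑(s ∩ G.neighborFinset v) ((r - 1) + 1) := by
          have hof := SimpleGraph.CliqueFreeOn.of_succ G hfree (Finset.mem_coe.2 hv)
          rw [show r - 1 + 1 = r by omega]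
          have hcoe : (↑(s ∩ G.neighborFinset v) : Set V) = ↑s ∩ G.neighborSet v := by
            rw [Finset.coe_inter, SimpleGraph.neighborFinset_def, Set.coe_toFinset]
          rw [hcoe]
          exact hof
        have hd : #(s ∩ G.neighborFinset v) ≤ n - a := by omega
        have hB1 : #(rCliquesIn G (r - 1) (s ∩ G.neighborFinset v)) ≤
            ∏ i ∈ range (r - 1), (#(s ∩ G.neighborFinset v) + i) / (r - 1) :=
          ih (r - 1) _ (by omega) (by omega) hfree'
        have hB2 : ∏ i ∈ range (r - 1), (#(s ∩ G.neighborFinset v) + i) / (r - 1) ≤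
            ∏ i ∈ range (r - 1), ((n - a) + i) / (r - 1) :=
          natprod_mono _ _ _ _ hd
        have hB3 : ∏ i ∈ range (r - 1), ((n - a) + i) / (r - 1) =
            ∏ i ∈ range (r - 1), (n + i) / r :=
          Finset.prod_congr rfl fun i hi => natdiv_key r n i (by omega) (mem_range.1 hi)
        have hC : #(rCliquesIn G r (s.erase v)) ≤ ∏ i ∈ range r, (#(s.erase v) + i) / r :=
          ih r _ (by rw [Finset.card_erase_of_mem hv]; omega) (by omega)
            (SimpleGraph.CliqueFreeOn.subset G (Finset.coe_subset.2 (Finset.erase_subset _ _)) hfree)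
        rw [Finset.card_erase_of_mem hv] at hC
        set Q := ∏ i ∈ range (r - 1), (n + i) / r with hQ
        have hQn : ∏ i ∈ range r, (n + i) / r = Q * a := by
          have h := Finset.prod_range_succ (fun i => (n + i) / r) (r - 1)
          rw [show r - 1 + 1 = r by omega] at h
          rw [h, hQ, ha, show n + (r - 1) = n + r - 1 by omega]
        have hQn1 : ∏ i ∈ range r, ((n - 1) + i) / r = ((n - 1) / r) * Q := by
          have h := Finset.prod_range_succ' (fun i => ((n - 1) + i) / r) (r - 1)
          rw [show r - 1 + 1 = r by omega] at h
          rw [h, Nat.add_zero, Nat.mul_comm, hQ]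
          congr 1
          exact Finset.prod_congr rfl fun i _ => by rw [show n - 1 + (i + 1) = n + i by omega]
        have hdiv : (n - 1) / r + 1 = a := by
          have h := Nat.add_div_right (n - 1) (show 0 < r by omega)
          rw [show n - 1 + r = n + r - 1 by omega] at h
          omega
        have hAQ : #((rCliquesIn G r s).filter (fun K => v ∈ K)) ≤ Q := by
          calc #((rCliquesIn G r s).filter (fun K => v ∈ K)) ≤ _ := hA
            _ ≤ _ := hB1
            _ ≤ _ := hB2
            _ = Q := hB3
        have hCQ : #(rCliquesIn G r (s.erase v)) ≤ ((n - 1) / r) * Q := by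
          rw [← hQn1]; exact hC
        have hfin : Q + ((n - 1) / r) * Q = Q * a := by
          rw [← hdiv]; ring
        rw [hQn]
        omega

theorem stmt_9 (r n : ℕ) (hr : 2 ≤ r) (G : SimpleGraph (Fin n))
    (hfree : G.CliqueFree (r + 1)) :
    ((rCliques G r).card : ℤ) ≤
      ⌊((n : ℝ) / r) *
        ((∏ s ∈ Finset.range r, ((n + s) / r) : ℕ) : ℝ) ^ (((r : ℝ) - 1) / r)⌋ := by
  classical
  have hz : #(rCliques G r) ≤ ∏ i ∈ range r, (n + i) / r := by
    have h1 : rCliques G r = rCliquesIn G r (univ : Finset (Fin n)) := by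
      ext K
      simp [rCliques, rCliquesIn, Finset.mem_filter, Finset.mem_powerset]
    rw [h1]
    have h2 := zykov G (r + Fintype.card (Fin n)) r univ le_rfl (by omega)
      (by rw [Finset.coe_univ]; exact (SimpleGraph.cliqueFreeOn_univ G).2 hfree)
    simpa [Finset.card_univ] using h2
  rw [Int.le_floor]
  set P : ℕ := ∏ s ∈ Finset.range r, ((n + s) / r) with hP
  have hcard : (((rCliques G r).card : ℤ) : ℝ) ≤ (P : ℝ) := by exact_mod_cast hz
  refine hcard.trans ?_
  have hrR : (0 : ℝ) < r := by exact_mod_cast (by omega : 0 < r)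
  rcases Nat.eq_zero_or_pos P with hP0 | hPpos
  · rw [hP0]
    have hne : ((r : ℝ) - 1) / r ≠ 0 := by
      have h2 : (2 : ℝ) ≤ r := by exact_mod_cast hr
      have hpos : (0 : ℝ) < ((r : ℝ) - 1) / r := div_pos (by linarith) (by linarith)
      exact ne_of_gt hpos
    push_cast
    rw [Real.zero_rpow hne, mul_zero]
  · have hp1 : (1 : ℝ) ≤ P := by exact_mod_cast hPpos
    have hp0 : (0 : ℝ) < P := by linarith
    have hsum : ∑ i ∈ range r, ((n + i) / r : ℕ) = n := natdiv_sum r n (by omega)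
    have key : (P : ℝ) ^ ((1 : ℝ) / r) ≤ (n : ℝ) / r := by
      have hgm := Real.geom_mean_le_arith_mean_weighted (range r) (fun _ => 1 / (r : ℝ))
        (fun i => (((n + i) / r : ℕ) : ℝ)) (fun i _ => by positivity)
        (by rw [Finset.sum_const, card_range, nsmul_eq_mul]; field_simp)
        (fun i _ => by positivity)
      have hPprod : (P : ℝ) = ∏ i ∈ range r, (((n + i) / r : ℕ) : ℝ) := by
        rw [hP]; push_cast; rfl
      calc (P : ℝ) ^ ((1 : ℝ) / r)
          = ∏ i ∈ range r, (((n + i) / r : ℕ) : ℝ) ^ ((1 : ℝ) / r) := by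
            rw [hPprod]
            exact (Real.finset_prod_rpow _ _ (fun i _ => by positivity) _).symm
        _ ≤ ∑ i ∈ range r, (1 / (r : ℝ)) * (((n + i) / r : ℕ) : ℝ) := hgm
        _ = (n : ℝ) / r := by
            rw [← Finset.mul_sum]
            have hs : ∑ i ∈ range r, (((n + i) / r : ℕ) : ℝ) = (n : ℝ) := by
              exact_mod_cast congrArg (fun x : ℕ => (x : ℝ)) hsum
            rw [hs]
            ring
    have hsplitP : (P : ℝ) = (P : ℝ) ^ ((1 : ℝ) / r) * (P : ℝ) ^ (((r : ℝ) - 1) / r) := by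
      rw [← Real.rpow_add hp0]
      rw [show (1 : ℝ) / r + ((r : ℝ) - 1) / r = 1 by field_simp; ring]
      rw [Real.rpow_one]
    conv_lhs => rw [hsplitP]
    exact mul_le_mul_of_nonneg_right key (Real.rpow_nonneg hp0.le _)
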